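/- Let m ≥ 2, let B be a real m×m matrix with Bᵀ = −B and B² = −I, and consider the symmetric control system ẋ_t = σ(x_t)a_t on ℝ^{m+1}, where σ(x) = [I_m ; (Bx_h)ᵀ] and the controls take values in the closed unit ball of ℝᵐ. Then the minimum time function T to reach the origin is locally Lipschitz continuous on the open set {x = (x_h,x_v) ∈ ℝ^{m+1} : x_h ≠ 0}. -/

import Mathlib

open Set MeasureTheory
open scoped RealInnerProductSpace

/-- An admissible trajectory of the Hörmander-type symmetric control system
`ẋ = σ(x)a = (a, ⟪Bx_h, a⟫)`, with controls in the closed unit ball of `ℝᵐ`. -/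
def IsHormTraj {m : ℕ} (B : EuclideanSpace ℝ (Fin m) →L[ℝ] EuclideanSpace ℝ (Fin m))
    (x₀ : EuclideanSpace ℝ (Fin m) × ℝ) (x : ℝ → EuclideanSpace ℝ (Fin m) × ℝ) : Prop :=
  x 0 = x₀ ∧ ContinuousOn x (Ici (0:ℝ)) ∧
    ∃ a : ℝ → EuclideanSpace ℝ (Fin m), Measurable a ∧ (∀ t, ‖a t‖ ≤ 1) ∧
      ∀ t : ℝ, 0 ≤ t →
        x t = x₀ + ∫ s in (0:ℝ)..t,
          ((a s, ⟪B (x s).1, a s⟫) : EuclideanSpace ℝ (Fin m) × ℝ)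

/-- The set of times at which the origin is reached from `x₀`. -/
def hormReachTimes {m : ℕ}
    (B : EuclideanSpace ℝ (Fin m) →L[ℝ] EuclideanSpace ℝ (Fin m))
    (x₀ : EuclideanSpace ℝ (Fin m) × ℝ) : Set ℝ :=
  {t | 0 ≤ t ∧ ∃ x : ℝ → EuclideanSpace ℝ (Fin m) × ℝ, IsHormTraj B x₀ x ∧ x t = 0}

section Helpers

variable {m : ℕ} (B : EuclideanSpace ℝ (Fin m) →L[ℝ] EuclideanSpace ℝ (Fin m))


/-- pairing integrals -/
lemma horm_integral_pair {f : ℝ → (EuclideanSpace ℝ (Fin m))} {g : ℝ → ℝ} {p q : ℝ}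
    (hf : IntervalIntegrable f volume p q) (hg : IntervalIntegrable g volume p q) :
    (∫ s in p..q, ((f s, g s) : (EuclideanSpace ℝ (Fin m)) × ℝ)) = (∫ s in p..q, f s, ∫ s in p..q, g s) := by
  have hpair : IntervalIntegrable (fun s => ((f s, g s) : (EuclideanSpace ℝ (Fin m)) × ℝ)) volume p q :=
    ⟨hf.1.prodMk hg.1, hf.2.prodMk hg.2⟩
  have h1 := (ContinuousLinearMap.fst ℝ (EuclideanSpace ℝ (Fin m)) ℝ).intervalIntegral_comp_comm hpair
  have h2 := (ContinuousLinearMap.snd ℝ (EuclideanSpace ℝ (Fin m)) ℝ).intervalIntegral_comp_comm hpair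
  simp only [ContinuousLinearMap.coe_fst', ContinuousLinearMap.coe_snd'] at h1 h2
  ext <;> simp [← h1, ← h2]

lemma horm_integrand_intervalIntegrable
    {x : ℝ → (EuclideanSpace ℝ (Fin m)) × ℝ} {a : ℝ → (EuclideanSpace ℝ (Fin m))}
    (hx : ContinuousOn x (Ici 0)) (ha : Measurable a) (ha1 : ∀ t, ‖a t‖ ≤ 1)
    {p q : ℝ} (hp : 0 ≤ p) (hpq : p ≤ q) :
    IntervalIntegrable (fun s => ((a s, ⟪B (x s).1, a s⟫) : (EuclideanSpace ℝ (Fin m)) × ℝ)) volume p q := by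
  rw [intervalIntegrable_iff]
  rw [uIoc_of_le hpq]
  have hIoc : Ioc p q ⊆ Ici (0:ℝ) := fun t ht => le_trans hp (le_of_lt ht.1)
  have hxm : AEStronglyMeasurable x (volume.restrict (Ioc p q)) :=
    (hx.mono hIoc).aestronglyMeasurable measurableSet_Ioc
  have ham : AEStronglyMeasurable a (volume.restrict (Ioc p q)) :=
    ha.aestronglyMeasurable
  have hBxm : AEStronglyMeasurable (fun s => B (x s).1) (volume.restrict (Ioc p q)) :=
    (B.continuous.comp continuous_fst).comp_aestronglyMeasurable hxm
  have hgm : AEStronglyMeasurable (fun s => ⟪B (x s).1, a s⟫) (volume.restrict (Ioc p q)) :=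
    hBxm.inner ham
  obtain ⟨C, hC⟩ := (isCompact_Icc (a := p) (b := q)).exists_bound_of_continuousOn
    ((hx.mono (Icc_subset_Ici_iff hpq |>.mpr hp)).comp continuousOn_id (fun t ht => ht))
  refine Integrable.mono' (integrable_const (max 1 (‖B‖ * C))) (ham.prodMk hgm) ?_
  refine (ae_restrict_iff' measurableSet_Ioc).2 (Filter.Eventually.of_forall (fun s hs => ?_))
  rw [Prod.norm_def]
  have h1 : ‖a s‖ ≤ 1 := ha1 s
  have h2 : ‖(x s).1‖ ≤ C := by
    have := hC s ⟨le_of_lt hs.1, hs.2⟩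
    calc ‖(x s).1‖ ≤ ‖x s‖ := by rw [Prod.norm_def]; exact le_max_left _ _
    _ ≤ C := this
  have h3 : ‖⟪B (x s).1, a s⟫‖ ≤ ‖B‖ * C := by
    rw [Real.norm_eq_abs]
    have h4 := abs_real_inner_le_norm (B (x s).1) (a s)
    have h5 := B.le_opNorm (x s).1
    have h6 := norm_nonneg (B (x s).1)
    have h7 := norm_nonneg (a s)
    have h8 := (norm_nonneg (x s).1).trans h2
    have h9 := B.opNorm_nonneg
    nlinarith
  exact max_le_max h1 h3

section Reach

variable {m : ℕ} {B : EuclideanSpace ℝ (Fin m) →L[ℝ] EuclideanSpace ℝ (Fin m)}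

/-- Reachability of `z` from `y` in time `s`. -/
def HormReach (B : EuclideanSpace ℝ (Fin m) →L[ℝ] EuclideanSpace ℝ (Fin m))
    (y z : EuclideanSpace ℝ (Fin m) × ℝ) (s : ℝ) : Prop :=
  0 ≤ s ∧ ∃ x, IsHormTraj B y x ∧ x s = z

lemma hormReachTimes_eq (y : (EuclideanSpace ℝ (Fin m)) × ℝ) :
    hormReachTimes B y = {t | HormReach B y 0 t} := rfl

lemma HormReach.trans {y z w : (EuclideanSpace ℝ (Fin m)) × ℝ} {s t : ℝ}
    (h1 : HormReach B y z s) (h2 : HormReach B z w t) :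
    HormReach B y w (s + t) := by
  obtain ⟨hs0, x₁, ⟨hx10, hx1c, a₁, ha1m, ha11, hi1⟩, hx1s⟩ := h1
  obtain ⟨ht0, x₂, ⟨hx20, hx2c, a₂, ha2m, ha21, hi2⟩, hx2t⟩ := h2
  set x : ℝ → (EuclideanSpace ℝ (Fin m)) × ℝ := fun u => x₁ (min u s) + (x₂ (max (u - s) 0) - x₂ 0) with hxdef
  set a : ℝ → (EuclideanSpace ℝ (Fin m)) := fun u => if u < s then a₁ u else a₂ (u - s) with hadef
  have hxle : ∀ u, u ≤ s → x u = x₁ u := by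
    intro u hu
    simp [hxdef, min_eq_left hu, max_eq_right (sub_nonpos.2 hu)]
  have hxge : ∀ u, s ≤ u → x u = x₂ (u - s) := by
    intro u hu
    simp only [hxdef, min_eq_right hu, max_eq_left (sub_nonneg.2 hu), hx20, hx1s]
    abel
  have hxc : ContinuousOn x (Ici 0) := by
    refine ContinuousOn.add ?_ (ContinuousOn.sub ?_ continuousOn_const)
    · exact hx1c.comp ((continuous_id.min continuous_const).continuousOn)
        (fun u hu => le_min hu hs0)
    · exact hx2c.comp (((continuous_id.sub continuous_const).max continuous_const).continuousOn)
        (fun u _ => Set.mem_Ici.mpr (le_max_right _ _))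
  have ham : Measurable a := by
    refine Measurable.ite ?_ ha1m (ha2m.comp (measurable_id.sub measurable_const))
    exact measurableSet_lt measurable_id measurable_const
  have ha1 : ∀ u, ‖a u‖ ≤ 1 := by
    intro u; by_cases h : u < s <;> simp [hadef, h, ha11, ha21]
  -- integrability of the concatenated integrand
  have hF_int : ∀ p q : ℝ, 0 ≤ p → p ≤ q → IntervalIntegrable
      (fun u => ((a u, ⟪B (x u).1, a u⟫) : (EuclideanSpace ℝ (Fin m)) × ℝ)) volume p q :=
    fun p q hp hpq => horm_integrand_intervalIntegrable B hxc ham ha1 hp hpq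
  have hs_null : ∀ᵐ τ : ℝ, τ ≠ s := by
    refine (MeasureTheory.ae_iff).2 ?_
    simp only [not_not]
    simpa using Real.volume_singleton (x := s)
  -- the integral of F on [0,u] for u ≤ s matches F₁
  have hcongr1 : ∀ u : ℝ, 0 ≤ u → u ≤ s →
      (∫ τ in (0:ℝ)..u, ((a τ, ⟪B (x τ).1, a τ⟫) : (EuclideanSpace ℝ (Fin m)) × ℝ))
        = ∫ τ in (0:ℝ)..u, ((a₁ τ, ⟪B (x₁ τ).1, a₁ τ⟫) : (EuclideanSpace ℝ (Fin m)) × ℝ) := by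
    intro u hu hus
    refine intervalIntegral.integral_congr_ae ?_
    filter_upwards [hs_null] with τ hτ hmem
    rw [uIoc_of_le hu] at hmem
    have hτs : τ < s := lt_of_le_of_ne (hmem.2.trans hus) hτ
    rw [hxle τ (le_of_lt hτs)]
    simp [hadef, if_pos hτs]
  have hid : ∀ t : ℝ, 0 ≤ t →
      x t = y + ∫ τ in (0:ℝ)..t, ((a τ, ⟪B (x τ).1, a τ⟫) : (EuclideanSpace ℝ (Fin m)) × ℝ) := by
    intro u hu
    rcases le_or_gt u s with hus | hsu
    · rw [hxle u hus, hcongr1 u hu hus, hi1 u hu]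
    · have hsu' : s ≤ u := le_of_lt hsu
      rw [hxge u hsu']
      have hz : x₁ s = y + ∫ τ in (0:ℝ)..s, ((a τ, ⟪B (x τ).1, a τ⟫) : (EuclideanSpace ℝ (Fin m)) × ℝ) := by
        rw [hcongr1 s hs0 le_rfl]; exact hi1 s hs0
      have hsplit := intervalIntegral.integral_add_adjacent_intervals
        (hF_int 0 s le_rfl hs0) (hF_int s u hs0 hsu')
      have hshift : (∫ τ in (0:ℝ)..(u - s), ((a (τ + s), ⟪B (x (τ + s)).1, a (τ + s)⟫) : (EuclideanSpace ℝ (Fin m)) × ℝ))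
          = ∫ τ in s..u, ((a τ, ⟪B (x τ).1, a τ⟫) : (EuclideanSpace ℝ (Fin m)) × ℝ) := by
        have := intervalIntegral.integral_comp_add_right
          (a := (0:ℝ)) (b := u - s)
          (fun τ => ((a τ, ⟪B (x τ).1, a τ⟫) : (EuclideanSpace ℝ (Fin m)) × ℝ)) s
        simpa using this
      have hsecond : (∫ τ in (0:ℝ)..(u - s), ((a (τ + s), ⟪B (x (τ + s)).1, a (τ + s)⟫) : (EuclideanSpace ℝ (Fin m)) × ℝ))
          = ∫ τ in (0:ℝ)..(u - s), ((a₂ τ, ⟪B (x₂ τ).1, a₂ τ⟫) : (EuclideanSpace ℝ (Fin m)) × ℝ) := by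
        refine intervalIntegral.integral_congr (fun τ hτ => ?_)
        rw [uIcc_of_le (by linarith)] at hτ
        have hτ0 : 0 ≤ τ := hτ.1
        have h1 : ¬ (τ + s < s) := by linarith
        have h2 : x (τ + s) = x₂ τ := by
          rw [hxge (τ + s) (by linarith)]; ring_nf
        simp [hadef, h1, h2]
      have h2 := hi2 (u - s) (by linarith)
      rw [h2, ← hx1s, hz, ← hsplit, ← hshift, hsecond]
      abel
  refine ⟨by linarith, x, ⟨?_, hxc, a, ham, ha1, hid⟩, ?_⟩
  · rw [hxle 0 hs0, hx10]
  · rw [hxge (s + t) (by linarith)]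
    simpa using hx2t

end Reach

section Explicit

variable {m : ℕ} {B : EuclideanSpace ℝ (Fin m) →L[ℝ] EuclideanSpace ℝ (Fin m)}
variable (hskew : ∀ v w : EuclideanSpace ℝ (Fin m), ⟪B v, w⟫ = -⟪v, B w⟫)
variable (hB2 : ∀ v, B (B v) = -v)

include hskew in
lemma horm_inner_Bself (u : EuclideanSpace ℝ (Fin m)) : ⟪B u, u⟫ = 0 := by
  have h := hskew u u
  have h2 : ⟪u, B u⟫ = ⟪B u, u⟫ := real_inner_comm _ _
  linarith [h, h2.symm ▸ h]

include hskew in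
/-- straight-line trajectory -/
lemma horm_line (c : EuclideanSpace ℝ (Fin m)) (v : ℝ) (u : EuclideanSpace ℝ (Fin m))
    (L : ℝ) (hu : ‖u‖ ≤ 1) (hL : 0 ≤ L) :
    HormReach B (c, v) (c + L • u, v + L * ⟪B c, u⟫) L := by
  set x : ℝ → EuclideanSpace ℝ (Fin m) × ℝ :=
    fun τ => (c + τ • u, v + τ * ⟪B c, u⟫) with hxdef
  have hconst : ∀ s : ℝ, ((fun _ : ℝ => u) s, ⟪B (x s).1, (fun _ : ℝ => u) s⟫)
      = ((u, ⟪B c, u⟫) : EuclideanSpace ℝ (Fin m) × ℝ) := by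
    intro s
    have h : ⟪B ((x s).1), u⟫ = ⟪B c, u⟫ := by
      show ⟪B (c + s • u), u⟫ = ⟪B c, u⟫
      rw [map_add, B.map_smul, inner_add_left, real_inner_smul_left,
        horm_inner_Bself hskew u]
      ring
    rw [Prod.mk.injEq]
    exact ⟨rfl, h⟩
  refine ⟨hL, x, ⟨by simp [hxdef], ?_, (fun _ => u), measurable_const, fun _ => hu, ?_⟩, ?_⟩
  · exact (Continuous.prodMk (by continuity) (by continuity)).continuousOn
  · intro t ht
    have : (∫ s in (0:ℝ)..t, ((fun _ : ℝ => u) s, ⟪B (x s).1, (fun _ : ℝ => u) s⟫))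
        = ∫ s in (0:ℝ)..t, ((u, ⟪B c, u⟫) : EuclideanSpace ℝ (Fin m) × ℝ) := by
      exact intervalIntegral.integral_congr (fun s _ => hconst s)
    rw [this, intervalIntegral.integral_const]
    show (c + t • u, v + t * ⟪B c, u⟫) = _
    rw [Prod.ext_iff]
    constructor
    · show c + t • u = c + (t - 0) • (u, (⟪B c, u⟫:ℝ)).1
      simp
    · show v + t * ⟪B c, u⟫ = v + ((t - 0) • ((u, (⟪B c, u⟫:ℝ)) : EuclideanSpace ℝ (Fin m) × ℝ)).2
      simp [smul_eq_mul]
  · show x L = _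
    simp [hxdef]

include hskew hB2 in
/-- rotating-climb trajectory: vertical speed `σ‖c‖` at unit control. -/
lemma horm_climb {c : EuclideanSpace ℝ (Fin m)} (hc : c ≠ 0) (v σ t : ℝ)
    (hσ : σ = 1 ∨ σ = -1) (ht : 0 ≤ t) :
    HormReach B (c, v)
      (Real.cos (t/‖c‖) • c + (σ * Real.sin (t/‖c‖)) • B c, v + σ * ‖c‖ * t) t := by
  set r : ℝ := ‖c‖ with hrdef
  have hr : 0 < r := norm_pos_iff.mpr hc
  have hσ2 : σ * σ = 1 := by rcases hσ with h | h <;> rw [h] <;> norm_num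
  have hBcc : ⟪B c, c⟫ = 0 := horm_inner_Bself hskew c
  have hcBc : ⟪c, B c⟫ = 0 := by rw [real_inner_comm]; exact hBcc
  have hcc : ⟪c, c⟫ = r ^ 2 := real_inner_self_eq_norm_sq c
  have hBcBc : ⟪B c, B c⟫ = r ^ 2 := by
    rw [hskew c (B c), hB2 c, inner_neg_right, neg_neg, hcc]
  set x : ℝ → EuclideanSpace ℝ (Fin m) × ℝ :=
    fun τ => (Real.cos (τ/r) • c + (σ * Real.sin (τ/r)) • B c, v + σ * r * τ) with hxdef
  set a : ℝ → EuclideanSpace ℝ (Fin m) :=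
    fun τ => (σ * Real.cos (τ/r) / r) • B c - (Real.sin (τ/r) / r) • c with hadef
  have hx1 : ∀ τ, (x τ).1 = Real.cos (τ/r) • c + (σ * Real.sin (τ/r)) • B c := fun τ => rfl
  have ha_norm : ∀ τ, ‖a τ‖ ≤ 1 := by
    intro τ
    have hsq : ‖a τ‖ ^ 2 = 1 := by
      rw [← real_inner_self_eq_norm_sq]
      show ⟪(σ * Real.cos (τ/r) / r) • B c - (Real.sin (τ/r) / r) • c,
            (σ * Real.cos (τ/r) / r) • B c - (Real.sin (τ/r) / r) • c⟫ = 1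
      simp only [inner_sub_left, inner_sub_right, real_inner_smul_left,
        real_inner_smul_right, hBcBc, hBcc, hcBc, hcc]
      have := Real.sin_sq_add_cos_sq (τ/r)
      field_simp
      linear_combination (Real.cos (τ/r))^2 * r^2 * hσ2 + r^2 * this
    nlinarith [norm_nonneg (a τ), hsq]
  have hsecond : ∀ τ, ⟪B ((x τ).1), a τ⟫ = σ * r := by
    intro τ
    rw [hx1]
    rw [map_add, B.map_smul, B.map_smul, hB2 c]
    rw [hadef]
    show ⟪Real.cos (τ/r) • B c + (σ * Real.sin (τ/r)) • (-c),
          (σ * Real.cos (τ/r) / r) • B c - (Real.sin (τ/r) / r) • c⟫ = σ * r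
    simp only [inner_add_left, inner_sub_left, inner_sub_right, inner_neg_left,
      inner_neg_right, real_inner_smul_left, real_inner_smul_right,
      hBcBc, hBcc, hcBc, hcc]
    have := Real.sin_sq_add_cos_sq (τ/r)
    field_simp
    linear_combination σ * r^2 * this
  have hcos_int : ∀ w : ℝ, (∫ s in (0:ℝ)..w, Real.cos (s/r)) = r * Real.sin (w/r) := by
    intro w
    rw [intervalIntegral.integral_comp_div (fun y => Real.cos y) (ne_of_gt hr),
      integral_cos]
    simp [smul_eq_mul]
  have hsin_int : ∀ w : ℝ, (∫ s in (0:ℝ)..w, Real.sin (s/r)) = r * (1 - Real.cos (w/r)) := by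
    intro w
    rw [intervalIntegral.integral_comp_div (fun y => Real.sin y) (ne_of_gt hr),
      integral_sin]
    simp [smul_eq_mul]
  refine ⟨ht, x, ⟨by simp [hxdef], ?_, a, ?_, ha_norm, ?_⟩, ?_⟩
  · refine (Continuous.prodMk ?_ (by continuity)).continuousOn
    exact ((Real.continuous_cos.comp (continuous_id.div_const r)).smul continuous_const).add
      ((continuous_const.mul (Real.continuous_sin.comp (continuous_id.div_const r))).smul continuous_const)
  · exact ((((continuous_const.mul (Real.continuous_cos.comp (continuous_id.div_const r))).div_const
      r).smul continuous_const).sub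
      (((Real.continuous_sin.comp (continuous_id.div_const r)).div_const r).smul
        continuous_const)).measurable
  · intro w hw
    have hfc : Continuous fun s : ℝ => σ * Real.cos (s/r) / r :=
      (continuous_const.mul (Real.continuous_cos.comp (continuous_id.div_const r))).div_const r
    have hgc : Continuous fun s : ℝ => Real.sin (s/r) / r :=
      (Real.continuous_sin.comp (continuous_id.div_const r)).div_const r
    have haInt : IntervalIntegrable a volume 0 w := by
      exact ((hfc.smul continuous_const).sub (hgc.smul continuous_const)).intervalIntegrable 0 w
    have hgInt : IntervalIntegrable (fun τ : ℝ => ⟪B ((x τ).1), a τ⟫) volume 0 w := by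
      have : (fun τ : ℝ => ⟪B ((x τ).1), a τ⟫) = fun _ : ℝ => σ * r := funext hsecond
      rw [this]
      exact intervalIntegrable_const
    rw [horm_integral_pair haInt hgInt]
    have hInt2 : (∫ s in (0:ℝ)..w, ⟪B ((x s).1), a s⟫) = w * (σ * r) := by
      rw [intervalIntegral.integral_congr
        (g := fun _ : ℝ => σ * r) (fun s _ => hsecond s)]
      simp [smul_eq_mul]; ring
    have hInt1 : (∫ s in (0:ℝ)..w, a s)
        = (σ * Real.sin (w/r)) • B c + (Real.cos (w/r) - 1) • c := by
      rw [hadef]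
      show (∫ s in (0:ℝ)..w, ((σ * Real.cos (s/r) / r) • B c - (Real.sin (s/r) / r) • c))
        = _
      rw [intervalIntegral.integral_sub
        (f := fun s : ℝ => (σ * Real.cos (s/r) / r) • B c)
        (g := fun s : ℝ => (Real.sin (s/r) / r) • c)
        ((hfc.smul continuous_const).intervalIntegrable 0 w :
          IntervalIntegrable (fun s : ℝ => (σ * Real.cos (s/r) / r) • B c) volume 0 w)
        ((hgc.smul continuous_const).intervalIntegrable 0 w :
          IntervalIntegrable (fun s : ℝ => (Real.sin (s/r) / r) • c) volume 0 w),
        intervalIntegral.integral_smul_const, intervalIntegral.integral_smul_const]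
      have e1 : (∫ s in (0:ℝ)..w, σ * Real.cos (s/r) / r) = σ * Real.sin (w/r) := by
        have : (fun s : ℝ => σ * Real.cos (s/r) / r) = fun s : ℝ => (σ / r) * Real.cos (s/r) := by
          funext s; ring
        rw [this, intervalIntegral.integral_const_mul, hcos_int w]
        field_simp
      have e2 : (∫ s in (0:ℝ)..w, Real.sin (s/r) / r) = 1 - Real.cos (w/r) := by
        have : (fun s : ℝ => Real.sin (s/r) / r) = fun s : ℝ => (1 / r) * Real.sin (s/r) := by
          funext s; ring
        rw [this, intervalIntegral.integral_const_mul, hsin_int w]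
        field_simp
      rw [e1, e2]
      module
    rw [hInt1, hInt2]
    show (Real.cos (w/r) • c + (σ * Real.sin (w/r)) • B c, v + σ * r * w) = _
    rw [Prod.mk.injEq]
    constructor
    · show Real.cos (w/r) • c + (σ * Real.sin (w/r)) • B c
        = c + ((σ * Real.sin (w/r)) • B c + (Real.cos (w/r) - 1) • c)
      module
    · show v + σ * r * w = v + w * (σ * r)
      ring
  · show x t = _
    rfl

include hskew hB2 in
lemma horm_inner_B_B (u w : EuclideanSpace ℝ (Fin m)) : ⟪B u, B w⟫ = ⟪u, w⟫ := by
  rw [hskew u (B w), hB2 w, inner_neg_right, neg_neg]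

include hskew hB2 in
lemma horm_norm_B (w : EuclideanSpace ℝ (Fin m)) : ‖B w‖ = ‖w‖ := by
  have h : ‖B w‖ ^ 2 = ‖w‖ ^ 2 := by
    rw [← real_inner_self_eq_norm_sq, ← real_inner_self_eq_norm_sq]
    exact horm_inner_B_B hskew hB2 w w
  have h1 := norm_nonneg (B w)
  have h2 := norm_nonneg w
  nlinarith [h, h1, h2, sq_nonneg (‖B w‖ - ‖w‖), sq_nonneg (‖B w‖ + ‖w‖)]

include hskew in
/-- straight-line trajectory between prescribed horizontal positions. -/
lemma horm_line_to (c c' : EuclideanSpace ℝ (Fin m)) (v : ℝ) :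
    HormReach B (c, v) (c', v + ⟪B c, c' - c⟫) ‖c' - c‖ := by
  set L := ‖c' - c‖ with hL
  set u : EuclideanSpace ℝ (Fin m) := L⁻¹ • (c' - c) with hu
  have hun : ‖u‖ ≤ 1 := by
    rcases eq_or_ne L 0 with h | h
    · rw [hu, h]; simp
    · rw [hu, norm_smul]
      have h2 : ‖(L⁻¹ : ℝ)‖ = L⁻¹ := by
        rw [Real.norm_eq_abs, abs_of_nonneg (inv_nonneg.mpr (by rw [hL]; positivity))]
      rw [h2, ← hL, inv_mul_cancel₀ h]
  have h := horm_line hskew c v u L hun (norm_nonneg _)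
  rcases eq_or_ne L 0 with h0 | h0
  · have hcc : c' - c = 0 := by rwa [hL, norm_eq_zero] at h0
    have hcc' : c' = c := by
      have := sub_eq_zero.mp hcc; exact this
    have e1 : c + L • u = c' := by rw [h0, zero_smul, add_zero, hcc']
    have e2 : v + L * ⟪B c, u⟫ = v + ⟪B c, c' - c⟫ := by
      rw [h0, hcc, inner_zero_right]; ring
    rwa [e1, e2] at h
  · have e1 : c + L • u = c' := by
      rw [hu, smul_smul, mul_inv_cancel₀ h0, one_smul]
      abel
    have e2 : v + L * ⟪B c, u⟫ = v + ⟪B c, c' - c⟫ := by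
      rw [hu, real_inner_smul_right, ← mul_assoc, mul_inv_cancel₀ h0, one_mul]
    rwa [e1, e2] at h

include hskew in
/-- straight line to the vertical axis keeps the vertical coordinate. -/
lemma horm_line_to_zero (c : EuclideanSpace ℝ (Fin m)) (v : ℝ) :
    HormReach B (c, v) (0, v) ‖c‖ := by
  have h := horm_line_to hskew c 0 v
  have e2 : v + ⟪B c, (0:EuclideanSpace ℝ (Fin m)) - c⟫ = v := by
    rw [zero_sub, inner_neg_right, horm_inner_Bself hskew c]; ring
  have e3 : ‖(0:EuclideanSpace ℝ (Fin m)) - c‖ = ‖c‖ := by rw [zero_sub, norm_neg]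
  rwa [e2, e3] at h

include hskew hB2 in
/-- rotational symmetry of the reach-time sets. -/
lemma horm_rot_subset (θ : ℝ) (c : EuclideanSpace ℝ (Fin m)) (v : ℝ) :
    hormReachTimes B (c, v) ⊆
      hormReachTimes B (Real.cos θ • c + Real.sin θ • B c, v) := by
  set R : EuclideanSpace ℝ (Fin m) →L[ℝ] EuclideanSpace ℝ (Fin m) :=
    Real.cos θ • ContinuousLinearMap.id ℝ (EuclideanSpace ℝ (Fin m)) + Real.sin θ • B with hRdef
  have hRapp : ∀ w, R w = Real.cos θ • w + Real.sin θ • B w := fun w => rfl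
  have hRB : ∀ w, B (R w) = R (B w) := by
    intro w
    rw [hRapp, hRapp, map_add, B.map_smul, B.map_smul]
  have hRinner : ∀ u w : EuclideanSpace ℝ (Fin m), ⟪R u, R w⟫ = ⟪u, w⟫ := by
    intro u w
    have h1 : ⟪B u, w⟫ = -⟪u, B w⟫ := hskew u w
    have h2 : ⟪B u, B w⟫ = ⟪u, w⟫ := horm_inner_B_B hskew hB2 u w
    rw [hRapp u, hRapp w]
    simp only [inner_add_left, inner_add_right, real_inner_smul_left,
      real_inner_smul_right, h1, h2]
    linear_combination (⟪u, w⟫ : ℝ) * Real.sin_sq_add_cos_sq θ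
  have hRnorm : ∀ u, ‖R u‖ = ‖u‖ := by
    intro u
    have h : ‖R u‖ ^ 2 = ‖u‖ ^ 2 := by
      rw [← real_inner_self_eq_norm_sq, ← real_inner_self_eq_norm_sq]
      exact hRinner u u
    nlinarith [norm_nonneg (R u), norm_nonneg u]
  intro t ht
  obtain ⟨ht0, x, ⟨hx0, hxc, a, ham, ha1, hid⟩, hxt⟩ := ht
  set Φ : (EuclideanSpace ℝ (Fin m) × ℝ) →L[ℝ] (EuclideanSpace ℝ (Fin m) × ℝ) :=
    R.prodMap (ContinuousLinearMap.id ℝ ℝ) with hΦdef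
  have hΦ : ∀ p : EuclideanSpace ℝ (Fin m) × ℝ, Φ p = (R p.1, p.2) := fun p => rfl
  refine ⟨ht0, fun τ => Φ (x τ), ⟨?_, Φ.continuous.comp_continuousOn hxc,
    fun τ => R (a τ), (R.continuous.measurable).comp ham,
    fun τ => by rw [hRnorm]; exact ha1 τ, ?_⟩, ?_⟩
  · show Φ (x 0) = _
    rw [hx0, hΦ, hRapp]
  · intro w hw
    have hInt := horm_integrand_intervalIntegrable B hxc ham ha1 le_rfl hw
    have hcomm := Φ.intervalIntegral_comp_comm hInt
    have hcong : ∀ s : ℝ, ((R (a s), ⟪B ((Φ (x s)).1), R (a s)⟫)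
        : EuclideanSpace ℝ (Fin m) × ℝ)
        = Φ ((a s, ⟪B ((x s).1), a s⟫)) := by
      intro s
      rw [hΦ (x s), hΦ]
      have h2 : ⟪B (R ((x s).1)), R (a s)⟫ = ⟪B ((x s).1), a s⟫ := by
        rw [hRB, hRinner]
      rw [Prod.mk.injEq]
      exact ⟨rfl, h2⟩
    have : (∫ s in (0:ℝ)..w, ((R (a s), ⟪B ((Φ (x s)).1), R (a s)⟫)
        : EuclideanSpace ℝ (Fin m) × ℝ))
        = Φ (∫ s in (0:ℝ)..w, ((a s, ⟪B ((x s).1), a s⟫)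
          : EuclideanSpace ℝ (Fin m) × ℝ)) := by
      rw [intervalIntegral.integral_congr (fun s _ => hcong s)]
      exact hcomm
    show Φ (x w) = _
    rw [hid w hw, map_add, hΦ ((c,v) : EuclideanSpace ℝ (Fin m) × ℝ), hRapp, ← this]
  · show Φ (x t) = 0
    rw [hxt, map_zero]

lemma horm_sInf_le {y w : EuclideanSpace ℝ (Fin m) × ℝ} {s : ℝ}
    (h : HormReach B y w s) (hne : (hormReachTimes B w).Nonempty) :
    sInf (hormReachTimes B y) ≤ s + sInf (hormReachTimes B w) := by
  have hbdd : BddBelow (hormReachTimes B y) := ⟨0, fun u hu => hu.1⟩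
  have key : ∀ t ∈ hormReachTimes B w, sInf (hormReachTimes B y) ≤ s + t := by
    intro t ht
    have h2 : HormReach B w (0 : EuclideanSpace ℝ (Fin m) × ℝ) t := ht
    exact csInf_le hbdd (h.trans h2)
  have h3 : sInf (hormReachTimes B y) - s ≤ sInf (hormReachTimes B w) :=
    le_csInf hne fun t ht => by linarith [key t ht]
  linarith

include hskew hB2 in
lemma horm_nonempty {c : EuclideanSpace ℝ (Fin m)} (hc : c ≠ 0) (v : ℝ) :
    (hormReachTimes B (c, v)).Nonempty := by
  have hr : (0:ℝ) < ‖c‖ := norm_pos_iff.mpr hc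
  set σ : ℝ := if 0 ≤ v then -1 else 1 with hσdef
  have hσ : σ = 1 ∨ σ = -1 := by
    by_cases h : 0 ≤ v <;> simp [hσdef, h]
  set t₁ : ℝ := |v| / ‖c‖ with ht₁def
  have ht₁ : 0 ≤ t₁ := by positivity
  have h1 := horm_climb hskew hB2 hc v σ t₁ hσ ht₁
  have hend : v + σ * ‖c‖ * t₁ = 0 := by
    have hrt : σ * ‖c‖ * (|v| / ‖c‖) = σ * |v| := by field_simp
    rw [ht₁def, hrt]
    by_cases h : 0 ≤ v
    · rw [hσdef, if_pos h, abs_of_nonneg h]; ring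
    · rw [hσdef, if_neg h, abs_of_neg (lt_of_not_ge h)]; ring
  rw [hend] at h1
  set c₁ := Real.cos (t₁/‖c‖) • c + (σ * Real.sin (t₁/‖c‖)) • B c with hc₁def
  have h2 := horm_line_to_zero hskew c₁ (0:ℝ)
  have h3 := h1.trans h2
  exact ⟨t₁ + ‖c₁‖, h3⟩

end Explicit

set_option maxHeartbeats 1000000 in
/-- for the Hörmander-type system, the minimum time function to reach
the origin is locally Lipschitz continuous on `{x = (x_h,x_v) : x_h ≠ 0}`. -/
theorem stmt_13 {m : ℕ} (hm : 2 ≤ m)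
    (B : EuclideanSpace ℝ (Fin m) →L[ℝ] EuclideanSpace ℝ (Fin m))
    (hskew : ∀ v w : EuclideanSpace ℝ (Fin m), ⟪B v, w⟫ = -⟪v, B w⟫)
    (hB2 : ∀ v, B (B v) = -v) :
    ∀ x₀ : EuclideanSpace ℝ (Fin m) × ℝ, x₀.1 ≠ 0 →
      ∃ ε > (0:ℝ), ∃ K : NNReal,
        LipschitzOnWith K (fun y => sInf (hormReachTimes B y))
          (Metric.ball x₀ ε) := by
  intro x₀ hx0
  set r := ‖x₀.1‖ with hrdef
  have hr0 : 0 < r := norm_pos_iff.mpr hx0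
  refine ⟨r/2, by positivity, Real.toNNReal (4 + 2/r), ?_⟩
  have hK : ((Real.toNNReal (4 + 2/r)) : ℝ) = 4 + 2/r :=
    Real.coe_toNNReal _ (by positivity)
  have key : ∀ y ∈ Metric.ball x₀ (r/2), ∀ z ∈ Metric.ball x₀ (r/2),
      sInf (hormReachTimes B y) ≤ sInf (hormReachTimes B z) + (4 + 2/r) * dist y z := by
    intro y hy z hz
    set d := dist y z with hddef
    have hd0 : 0 ≤ d := dist_nonneg
    have hy1 : ‖y.1 - x₀.1‖ < r/2 := by
      rw [← dist_eq_norm]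
      calc dist y.1 x₀.1 ≤ dist y x₀ := by rw [Prod.dist_eq]; exact le_max_left _ _
      _ < r/2 := Metric.mem_ball.1 hy
    have hz1 : ‖z.1 - x₀.1‖ < r/2 := by
      rw [← dist_eq_norm]
      calc dist z.1 x₀.1 ≤ dist z x₀ := by rw [Prod.dist_eq]; exact le_max_left _ _
      _ < r/2 := Metric.mem_ball.1 hz
    have hylb : r/2 < ‖y.1‖ := by
      have h1 : ‖x₀.1‖ - ‖y.1‖ ≤ ‖x₀.1 - y.1‖ := norm_sub_norm_le _ _
      have h2 : ‖x₀.1 - y.1‖ = ‖y.1 - x₀.1‖ := norm_sub_rev _ _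
      rw [← hrdef] at h1
      linarith
    have hyub : ‖y.1‖ < 3*r/2 := by
      have h1 : ‖y.1‖ - ‖x₀.1‖ ≤ ‖y.1 - x₀.1‖ := norm_sub_norm_le _ _
      rw [← hrdef] at h1
      linarith
    have hzlb : r/2 < ‖z.1‖ := by
      have h1 : ‖x₀.1‖ - ‖z.1‖ ≤ ‖x₀.1 - z.1‖ := norm_sub_norm_le _ _
      have h2 : ‖x₀.1 - z.1‖ = ‖z.1 - x₀.1‖ := norm_sub_rev _ _
      rw [← hrdef] at h1
      linarith
    have hz_ne : z.1 ≠ 0 := by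
      intro h
      rw [h, norm_zero] at hzlb
      linarith
    -- step 1: straight line from y to above z
    have h1 := horm_line_to hskew y.1 z.1 y.2
    set v₁ : ℝ := y.2 + ⟪B y.1, z.1 - y.1⟫ with hv₁def
    set L : ℝ := ‖z.1 - y.1‖ with hLdef
    -- step 2: vertical climb at base z.1
    set Δ : ℝ := z.2 - v₁ with hΔdef
    set σ : ℝ := if 0 ≤ Δ then 1 else -1 with hσdef
    have hσ : σ = 1 ∨ σ = -1 := by
      by_cases h : 0 ≤ Δ <;> simp [hσdef, h]
    set t₂ : ℝ := |Δ| / ‖z.1‖ with ht₂def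
    have ht₂0 : 0 ≤ t₂ := by positivity
    have h2 := horm_climb hskew hB2 hz_ne v₁ σ t₂ hσ ht₂0
    have hv2 : v₁ + σ * ‖z.1‖ * t₂ = z.2 := by
      have hz1ne : ‖z.1‖ ≠ 0 := ne_of_gt (lt_trans (by positivity) hzlb)
      have hrt : σ * ‖z.1‖ * (|Δ| / ‖z.1‖) = σ * |Δ| := by field_simp
      rw [ht₂def, hrt]
      by_cases h : 0 ≤ Δ
      · rw [hσdef, if_pos h, abs_of_nonneg h, hΔdef]; ring
      · rw [hσdef, if_neg h, abs_of_neg (lt_of_not_ge h), hΔdef]; ring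
    set θ : ℝ := σ * (t₂ / ‖z.1‖) with hθdef
    have hrot : Real.cos (t₂/‖z.1‖) • z.1 + (σ * Real.sin (t₂/‖z.1‖)) • B z.1
        = Real.cos θ • z.1 + Real.sin θ • B z.1 := by
      rcases hσ with h | h <;> rw [hθdef, h] <;>
        simp [Real.cos_neg, Real.sin_neg, neg_smul, one_mul, neg_one_mul]
    rw [hv2, hrot] at h2
    have hreach : HormReach B y (Real.cos θ • z.1 + Real.sin θ • B z.1, z.2) (L + t₂) := by
      have h1' : HormReach B y (z.1, v₁) L := by
        rw [← Prod.mk.eta (p := y)]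
        exact h1
      exact h1'.trans h2
    have hsub := horm_rot_subset hskew hB2 θ z.1 z.2
    have hne_z : (hormReachTimes B (z.1, z.2)).Nonempty :=
      horm_nonempty hskew hB2 hz_ne z.2
    have hne_rot := hne_z.mono hsub
    have i1 := horm_sInf_le hreach hne_rot
    have i2 : sInf (hormReachTimes B (Real.cos θ • z.1 + Real.sin θ • B z.1, z.2))
        ≤ sInf (hormReachTimes B (z.1, z.2)) :=
      csInf_le_csInf ⟨(0:ℝ), fun u hu => hu.1⟩ hne_z hsub
    rw [Prod.mk.eta] at i2
    -- numeric bound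
    have hL : L ≤ d := by
      rw [hLdef, ← dist_eq_norm, dist_comm]
      calc dist y.1 z.1 ≤ dist y z := by rw [Prod.dist_eq]; exact le_max_left _ _
      _ = d := rfl
    have hv : |z.2 - y.2| ≤ d := by
      rw [← Real.dist_eq, dist_comm]
      calc dist y.2 z.2 ≤ dist y z := by rw [Prod.dist_eq]; exact le_max_right _ _
      _ = d := rfl
    have hBy : ‖B y.1‖ = ‖y.1‖ := horm_norm_B hskew hB2 y.1
    have hinner : |⟪B y.1, z.1 - y.1⟫| ≤ ‖y.1‖ * L := by
      calc |⟪B y.1, z.1 - y.1⟫| ≤ ‖B y.1‖ * ‖z.1 - y.1‖ := abs_real_inner_le_norm _ _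
      _ = ‖y.1‖ * L := by rw [hBy, hLdef]
    have hΔb : |Δ| ≤ d + (3*r/2) * d := by
      have h1 : |Δ| ≤ |z.2 - y.2| + |⟪B y.1, z.1 - y.1⟫| := by
        rw [hΔdef, hv₁def]
        calc |z.2 - (y.2 + ⟪B y.1, z.1 - y.1⟫)|
            = |(z.2 - y.2) + (-⟪B y.1, z.1 - y.1⟫)| := by ring_nf
        _ ≤ |z.2 - y.2| + |(-⟪B y.1, z.1 - y.1⟫)| := abs_add_le _ _
        _ = |z.2 - y.2| + |⟪B y.1, z.1 - y.1⟫| := by rw [abs_neg]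
      have h2 : ‖y.1‖ * L ≤ (3*r/2) * d := by
        have hL0 : 0 ≤ L := by rw [hLdef]; positivity
        exact mul_le_mul (le_of_lt hyub) hL hL0 (by positivity)
      linarith
    have hz1ne : ‖z.1‖ ≠ 0 := ne_of_gt (lt_trans (by positivity) hzlb)
    have hteq : t₂ * ‖z.1‖ = |Δ| := by
      rw [ht₂def, div_mul_cancel₀ _ hz1ne]
    have ht₂b : t₂ ≤ 2*d/r + 3*d := by
      have hA : t₂ * (r/2) ≤ |Δ| := by
        calc t₂ * (r/2) ≤ t₂ * ‖z.1‖ :=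
          mul_le_mul_of_nonneg_left (le_of_lt hzlb) ht₂0
        _ = |Δ| := hteq
      have hBb : t₂ * r ≤ 2*d + 3*r*d := by linarith
      have hC : t₂ ≤ (2*d + 3*r*d)/r := by
        rw [le_div_iff₀ hr0]; linarith
      have hD : (2*d + 3*r*d)/r = 2*d/r + 3*d := by field_simp
      linarith
    have hfinal : L + t₂ ≤ (4 + 2/r) * d := by
      have hexp : (4 + 2/r) * d = 4*d + 2*d/r := by ring
      linarith
    linarith [i1, i2]
  rw [lipschitzOnWith_iff_dist_le_mul]
  intro y hy z hz
  have a1 := key y hy z hz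
  have a2 := key z hz y hy
  rw [dist_comm z y] at a2
  show dist (sInf (hormReachTimes B y)) (sInf (hormReachTimes B z)) ≤ _
  rw [Real.dist_eq, hK]
  exact abs_sub_le_iff.mpr ⟨by linarith, by linarith⟩
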